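/- Let a < b and let F_η be the CDF given by F_η(x) = 1 − (1/(η(b−a)))·ln((1 + e^{−η(x−b)})/(1 + e^{−η(x−a)})). Then for every real x with x ≠ a and x ≠ b, F_η(x) converges as η → ∞ to the CDF of Uniform(a,b): it tends to 0 for x < a, to (x−a)/(b−a) for a < x < b, and to 1 for x > b. -/

import Mathlib

open Filter

lemma gneg15 (c : ℝ) (hc : c < 0) :
    Tendsto (fun η : ℝ => Real.log (1 + Real.exp (η * c)) / η) atTop (nhds 0) := by
  have h1 : Tendsto (fun η : ℝ => η * c) atTop atBot :=
    tendsto_id.atTop_mul_const_of_neg hc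
  have hexp := Real.tendsto_exp_atBot.comp h1
  have h3 : Tendsto (fun η : ℝ => 1 + Real.exp (η * c)) atTop (nhds 1) := by
    simpa using tendsto_const_nhds.add hexp
  have h2 : Tendsto (fun η : ℝ => Real.log (1 + Real.exp (η * c))) atTop (nhds 0) := by
    have := (Real.continuousAt_log (by norm_num : (1:ℝ) ≠ 0)).tendsto.comp h3
    simpa [Function.comp_def] using this
  simpa [div_eq_mul_inv] using h2.mul tendsto_inv_atTop_zero

lemma gpos15 (c : ℝ) (hc : 0 < c) :
    Tendsto (fun η : ℝ => Real.log (1 + Real.exp (η * c)) / η) atTop (nhds c) := by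
  have hneg := gneg15 (-c) (by linarith)
  have heq : ∀ᶠ η : ℝ in atTop,
      c + Real.log (1 + Real.exp (η * -c)) / η
        = Real.log (1 + Real.exp (η * c)) / η := by
    filter_upwards [eventually_gt_atTop 0] with η hη
    have h1 : (1 : ℝ) + Real.exp (η * c) = Real.exp (η * c) * (1 + Real.exp (η * -c)) := by
      rw [mul_add, mul_one, ← Real.exp_add]
      have : η * c + η * -c = 0 := by ring
      rw [this, Real.exp_zero]
      ring
    rw [h1, Real.log_mul (Real.exp_ne_zero _) (by positivity), Real.log_exp]
    field_simp
  have h2 : Tendsto (fun η : ℝ => c + Real.log (1 + Real.exp (η * -c)) / η)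
      atTop (nhds (c + 0)) := tendsto_const_nhds.add hneg
  simpa using h2.congr' heq

lemma main15 (a b : ℝ) (hab : a < b) (x : ℝ) (la lb : ℝ)
    (hb : Tendsto (fun η : ℝ => Real.log (1 + Real.exp (η * (b - x))) / η) atTop (nhds lb))
    (ha : Tendsto (fun η : ℝ => Real.log (1 + Real.exp (η * (a - x))) / η) atTop (nhds la)) :
    Tendsto (fun η : ℝ => 1 - (1 / (η * (b - a))) *
        Real.log ((1 + Real.exp (-η * (x - b))) / (1 + Real.exp (-η * (x - a)))))
      atTop (nhds (1 - (lb - la) / (b - a))) := by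
  have hba : b - a ≠ 0 := by linarith
  have h : Tendsto (fun η : ℝ =>
      1 - ((Real.log (1 + Real.exp (η * (b - x))) / η
        - Real.log (1 + Real.exp (η * (a - x))) / η)) / (b - a))
      atTop (nhds (1 - (lb - la) / (b - a))) :=
    tendsto_const_nhds.sub ((hb.sub ha).div_const _)
  apply h.congr'
  filter_upwards [eventually_gt_atTop 0] with η hη
  have hb' : -η * (x - b) = η * (b - x) := by ring
  have ha' : -η * (x - a) = η * (a - x) := by ring
  rw [hb', ha', Real.log_div (by positivity) (by positivity)]
  field_simp

theorem stmt15 (a b : ℝ) (hab : a < b) (x : ℝ) (hxa : x ≠ a) (hxb : x ≠ b) :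
    (x < a →
      Tendsto (fun η : ℝ => 1 - (1 / (η * (b - a))) *
          Real.log ((1 + Real.exp (-η * (x - b))) / (1 + Real.exp (-η * (x - a)))))
        atTop (nhds 0)) ∧
    (a < x → x < b →
      Tendsto (fun η : ℝ => 1 - (1 / (η * (b - a))) *
          Real.log ((1 + Real.exp (-η * (x - b))) / (1 + Real.exp (-η * (x - a)))))
        atTop (nhds ((x - a) / (b - a)))) ∧
    (b < x →
      Tendsto (fun η : ℝ => 1 - (1 / (η * (b - a))) *
          Real.log ((1 + Real.exp (-η * (x - b))) / (1 + Real.exp (-η * (x - a)))))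
        atTop (nhds 1)) := by
  have hba : b - a ≠ 0 := by linarith
  refine ⟨fun h1 => ?_, fun h1 h2 => ?_, fun h1 => ?_⟩
  · have := main15 a b hab x (a - x) (b - x)
      (gpos15 (b - x) (by linarith)) (gpos15 (a - x) (by linarith))
    have he : (1 : ℝ) - ((b - x) - (a - x)) / (b - a) = 0 := by
      field_simp
      ring
    rwa [he] at this
  · have := main15 a b hab x 0 (b - x)
      (gpos15 (b - x) (by linarith)) (gneg15 (a - x) (by linarith))
    have he : (1 : ℝ) - ((b - x) - 0) / (b - a) = (x - a) / (b - a) := by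
      field_simp
      ring
    rwa [he] at this
  · have := main15 a b hab x 0 0
      (gneg15 (b - x) (by linarith)) (gneg15 (a - x) (by linarith))
    simpa using this
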